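/- For every q > 0, every integer k ≥ 1, and every x > 0, one has ψ_q^{(k+2)}(x)·ψ_q^{(k)}(x) − (ψ_q^{(k+1)}(x))² > 0; consequently the function x ↦ ψ_q^{(k+1)}(x)/ψ_q^{(k)}(x) is increasing on (0, ∞). -/

import Mathlib

open Real Filter Topology


noncomputable def qDigamma (q x : ℝ) : ℝ :=
  if q < 1 then
    -Real.log (1 - q) +
      Real.log q * ∑' n : ℕ, q ^ (((n : ℝ) + 1) * x) / (1 - q ^ ((n : ℝ) + 1))
  else if 1 < q then
    -Real.log (q - 1) +
      Real.log q *
        (x - 1 / 2 - ∑' n : ℕ, q ^ (-(((n : ℝ) + 1) * x)) / (1 - q ^ (-((n : ℝ) + 1))))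
  else
    deriv (fun y : ℝ => Real.log (Real.Gamma y)) x

/-- strict Cauchy-Schwarz for series, with an extra nonnegative constant `A`. -/
lemma key_cs (u t : ℕ → ℝ) (A : ℝ) (hA : 0 ≤ A) (hu : ∀ n, 0 ≤ u n)
    (h0 : 0 < u 0) (h1 : 0 < u 1) (ht : t 0 ≠ t 1)
    (hS : Summable u) (hSt : Summable (fun n => t n * u n))
    (hSt2 : Summable (fun n => t n ^ 2 * u n)) :
    0 < (∑' n, t n ^ 2 * u n) * (A + ∑' n, u n) - (∑' n, t n * u n) ^ 2 := by
  set S := ∑' n, u n with hSdef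
  set B := ∑' n, t n * u n with hBdef
  set C := ∑' n, t n ^ 2 * u n with hCdef
  have hSpos : 0 < S := hS.tsum_pos hu 0 h0
  have hC0 : 0 ≤ C := tsum_nonneg fun n => mul_nonneg (sq_nonneg _) (hu n)
  set r := B / S with hr
  have hsum : Summable (fun n => u n * (t n - r) ^ 2) := by
    have : (fun n => u n * (t n - r) ^ 2)
        = fun n => t n ^ 2 * u n - (2 * r) * (t n * u n) + r ^ 2 * u n := by
      funext n; ring
    rw [this]
    exact ((hSt2.sub ((hSt.mul_left _))).add (hS.mul_left _))
  have hval : (∑' n, u n * (t n - r) ^ 2) = C - 2 * r * B + r ^ 2 * S := by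
    have : (fun n => u n * (t n - r) ^ 2)
        = fun n => t n ^ 2 * u n - (2 * r) * (t n * u n) + r ^ 2 * u n := by
      funext n; ring
    rw [this, Summable.tsum_add (hSt2.sub (hSt.mul_left _)) (hS.mul_left _),
      Summable.tsum_sub hSt2 (hSt.mul_left _), tsum_mul_left, tsum_mul_left]
  have hge : u 0 * (t 0 - r) ^ 2 + u 1 * (t 1 - r) ^ 2 ≤ ∑' n, u n * (t n - r) ^ 2 := by
    have := Summable.sum_le_tsum ({0, 1} : Finset ℕ)
      (fun n _ => mul_nonneg (hu n) (sq_nonneg _)) hsum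
    simpa using this
  have hpos2 : 0 < u 0 * (t 0 - r) ^ 2 + u 1 * (t 1 - r) ^ 2 := by
    have hne : t 0 - r ≠ 0 ∨ t 1 - r ≠ 0 := by
      by_contra hc
      push_neg at hc
      exact ht (by linarith [sub_eq_zero.mp hc.1, sub_eq_zero.mp hc.2])
    rcases hne with h | h
    · have h2 : 0 < (t 0 - r) ^ 2 := by positivity
      nlinarith [mul_nonneg (hu 1) (sq_nonneg (t 1 - r)), mul_pos h0 h2]
    · have h2 : 0 < (t 1 - r) ^ 2 := by positivity
      nlinarith [mul_nonneg (hu 0) (sq_nonneg (t 0 - r)), mul_pos h1 h2]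
  have hmain : 0 < C * S - B ^ 2 := by
    have h2 : 0 < ∑' n, u n * (t n - r) ^ 2 := lt_of_lt_of_le hpos2 hge
    have : C - 2 * r * B + r ^ 2 * S = C - B ^ 2 / S := by
      rw [hr]; field_simp; ring
    rw [hval, this] at h2
    have := mul_pos hSpos h2
    calc (0:ℝ) < S * (C - B ^ 2 / S) := this
      _ = C * S - B ^ 2 := by field_simp; try ring
  nlinarith [mul_nonneg hA hC0]

/-- iterated derivatives only depend on the germ of the function. -/
lemma EventuallyEq.iteratedDeriv_eq' {f g : ℝ → ℝ} {x : ℝ} (m : ℕ) (h : f =ᶠ[nhds x] g) :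
    iteratedDeriv m f x = iteratedDeriv m g x := by
  induction m generalizing f g with
  | zero => simpa using h.self_of_nhds
  | succ m ih =>
    rw [iteratedDeriv_succ', iteratedDeriv_succ']
    exact ih h.deriv
open Set

section family
variable (g : ℕ → ℕ → ℝ → ℝ)
variable (hderiv : ∀ m n x, 0 < x → HasDerivAt (g m n) (g (m+1) n x) x)
variable (hsum0 : ∀ x, 0 < x → Summable (fun n => g 0 n x))
variable (hbound : ∀ m r, 0 < r → ∃ u : ℕ → ℝ, Summable u ∧ ∀ n x, r ≤ x → |g (m+1) n x| ≤ u n)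

include hderiv hsum0 hbound

lemma fam_summable : ∀ m x, 0 < x → Summable (fun n => g m n x) := by
  intro m x hx
  cases m with
  | zero => exact hsum0 x hx
  | succ m =>
    obtain ⟨u, hu, hb⟩ := hbound m x hx
    exact Summable.of_norm_bounded hu (fun n => by
      simpa [Real.norm_eq_abs] using hb n x le_rfl)

lemma fam_hasDerivAt : ∀ m x, 0 < x →
    HasDerivAt (fun y => ∑' n, g m n y) (∑' n, g (m+1) n x) x := by
  intro m x hx
  obtain ⟨u, hu, hb⟩ := hbound m (x/2) (by linarith)
  refine hasDerivAt_tsum_of_isPreconnected hu isOpen_Ioi (isPreconnected_Ioi)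
    (fun n y hy => hderiv m n y (lt_trans (by linarith) hy))
    (fun n y hy => by simpa [Real.norm_eq_abs] using hb n y (le_of_lt hy))
    (show x ∈ Ioi (x/2) by simp; linarith)
    (fam_summable g hderiv hsum0 hbound m x hx)
    (show x ∈ Ioi (x/2) by simp; linarith)

lemma fam_iteratedDeriv : ∀ m x, 0 < x →
    iteratedDeriv m (fun y => ∑' n, g 0 n y) x = ∑' n, g m n x := by
  intro m
  induction m with
  | zero => intro x hx; simp
  | succ m ih =>
    intro x hx
    rw [iteratedDeriv_succ]
    have heq : iteratedDeriv m (fun y => ∑' n, g 0 n y) =ᶠ[nhds x]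
        (fun y => ∑' n, g m n y) :=
      eventuallyEq_of_mem (isOpen_Ioi.mem_nhds hx) (fun y hy => ih y hy)
    rw [heq.deriv_eq]
    exact (fam_hasDerivAt g hderiv hsum0 hbound m x hx).deriv

end family

section repr
variable (g : ℕ → ℕ → ℝ → ℝ)
variable (hderiv : ∀ m n x, 0 < x → HasDerivAt (g m n) (g (m+1) n x) x)
variable (hsum0 : ∀ x, 0 < x → Summable (fun n => g 0 n x))
variable (hbound : ∀ m r, 0 < r → ∃ u : ℕ → ℝ, Summable u ∧ ∀ n x, r ≤ x → |g (m+1) n x| ≤ u n)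

include hderiv hsum0 hbound

lemma affine_hasDerivAt (C A : ℝ) : ∀ y, 0 < y →
    HasDerivAt (fun z => C + (A * z + ∑' n, g 0 n z)) (A + ∑' n, g 1 n y) y := by
  intro y hy
  have h1 : HasDerivAt (fun z : ℝ => A * z) A y := by
    simpa using (hasDerivAt_id y).const_mul A
  have h2 := fam_hasDerivAt g hderiv hsum0 hbound 0 y hy
  simpa using ((h1.add h2).const_add C)

lemma rep_affine (C A : ℝ) : ∀ m, 1 ≤ m → ∀ x, 0 < x →
    iteratedDeriv m (fun y => C + (A * y + ∑' n, g 0 n y)) x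
      = (if m = 1 then A else 0) + ∑' n, g m n x := by
  intro m hm x hx
  obtain ⟨j, rfl⟩ : ∃ j, m = j + 1 := ⟨m - 1, by omega⟩
  rw [iteratedDeriv_succ']
  have h2 : deriv (fun y => C + (A * y + ∑' n, g 0 n y)) =ᶠ[nhds x]
      fun y => A + ∑' n, g 1 n y :=
    eventuallyEq_of_mem (isOpen_Ioi.mem_nhds hx)
      (fun y hy => (affine_hasDerivAt g hderiv hsum0 hbound C A y hy).deriv)
  rw [EventuallyEq.iteratedDeriv_eq' j h2]
  cases j with
  | zero => simp
  | succ i =>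
    have hshift := fam_iteratedDeriv (fun m => g (m+1))
      (fun m n x hx => hderiv (m+1) n x hx)
      (fun x hx => fam_summable g hderiv hsum0 hbound 1 x hx)
      (fun m r hr => hbound (m+1) r hr) (i+1) x hx
    rw [iteratedDeriv_succ', deriv_const_add' A, ← iteratedDeriv_succ']
    simpa using hshift

lemma rep_affine_hasDerivAt (C A : ℝ) : ∀ m, 1 ≤ m → ∀ x, 0 < x →
    HasDerivAt (iteratedDeriv m (fun y => C + (A * y + ∑' n, g 0 n y)))
      (∑' n, g (m+1) n x) x := by
  intro m hm x hx
  have heq : iteratedDeriv m (fun y => C + (A * y + ∑' n, g 0 n y)) =ᶠ[nhds x]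
      fun y => (if m = 1 then A else 0) + ∑' n, g m n y :=
    eventuallyEq_of_mem (isOpen_Ioi.mem_nhds hx)
      (fun y hy => rep_affine g hderiv hsum0 hbound C A m hm y hy)
  have h2 : HasDerivAt (fun y => (if m = 1 then A else 0) + ∑' n, g m n y)
      (∑' n, g (m+1) n x) x :=
    (fam_hasDerivAt g hderiv hsum0 hbound m x hx).const_add _
  exact h2.congr_of_eventuallyEq heq

end repr

/-- master lemma: from a signed representation of the iterated derivatives. -/
lemma master (f : ℝ → ℝ) (k : ℕ) (V : ℕ → ℝ → ℝ)
    (hrep : ∀ m, m ≤ 2 → ∀ x, 0 < x →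
      iteratedDeriv (k+m) f x = (-1 : ℝ)^(k+m+1) * V m x)
    (hV0 : ∀ x, 0 < x → 0 < V 0 x)
    (hCS : ∀ x, 0 < x → 0 < V 2 x * V 0 x - (V 1 x)^2)
    (hder : ∀ m, m ≤ 1 → ∀ x, 0 < x →
      HasDerivAt (iteratedDeriv (k+m) f) (iteratedDeriv (k+m+1) f x) x) :
    (∀ x : ℝ, 0 < x →
      iteratedDeriv (k + 2) f x * iteratedDeriv k f x -
        (iteratedDeriv (k + 1) f x) ^ 2 > 0) ∧
    StrictMonoOn
      (fun x : ℝ => iteratedDeriv (k + 1) f x / iteratedDeriv k f x)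
      (Set.Ioi 0) := by
  have key : ∀ x : ℝ, 0 < x →
      iteratedDeriv (k + 2) f x * iteratedDeriv k f x -
        (iteratedDeriv (k + 1) f x) ^ 2 > 0 := by
    intro x hx
    have h0 := hrep 0 (by norm_num) x hx
    have h1 := hrep 1 (by norm_num) x hx
    have h2 := hrep 2 (by norm_num) x hx
    rw [Nat.add_zero] at h0
    rw [h0, h1, h2]
    have hk3 : (-1:ℝ)^(k+2+1) * (-1:ℝ)^(k+0+1) = 1 := by
      rw [← pow_add]
      exact Even.neg_one_pow ⟨k+2, by ring⟩
    have hk2 : ((-1:ℝ)^(k+1+1))^2 = 1 := by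
      rw [← pow_mul]
      exact Even.neg_one_pow ⟨k+1+1, by ring⟩
    have e1 : (-1:ℝ)^(k+2+1) * V 2 x * ((-1:ℝ)^(k+0+1) * V 0 x) -
        ((-1:ℝ)^(k+1+1) * V 1 x)^2 = V 2 x * V 0 x - (V 1 x)^2 := by
      linear_combination (V 2 x * V 0 x) * hk3 - (V 1 x)^2 * hk2
    calc (0:ℝ) < V 2 x * V 0 x - (V 1 x)^2 := hCS x hx
      _ = _ := by rw [← e1]
  refine ⟨key, ?_⟩
  have hD0 : ∀ x, 0 < x → iteratedDeriv k f x ≠ 0 := by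
    intro x hx
    have h0 := hrep 0 (by norm_num) x hx
    rw [Nat.add_zero] at h0
    rw [h0]
    have := hV0 x hx
    positivity
  have hdd : ∀ x, 0 < x → HasDerivAt
      (fun y : ℝ => iteratedDeriv (k + 1) f y / iteratedDeriv k f y)
      ((iteratedDeriv (k+2) f x * iteratedDeriv k f x -
        (iteratedDeriv (k+1) f x)^2) / (iteratedDeriv k f x)^2) x := by
    intro x hx
    have hnum := hder 1 (by norm_num) x hx
    have hden := hder 0 (by norm_num) x hx
    rw [Nat.add_zero] at hden
    have := hnum.div hden (hD0 x hx)
    exact this.congr_deriv (by ring_nf)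
  refine strictMonoOn_of_deriv_pos (convex_Ioi 0) ?_ ?_
  · intro x hx
    exact (hdd x hx).differentiableAt.continuousAt.continuousWithinAt
  · intro x hx
    rw [interior_Ioi] at hx
    rw [(hdd x hx).deriv]
    refine div_pos (key x hx) ?_
    have := hD0 x hx
    positivity

lemma exp_case (f : ℝ → ℝ) (k : ℕ) (hk : 1 ≤ k) (l : ℝ) (hl : 0 < l)
    (c : ℕ → ℝ) (hc : ∀ n, c n < 0) (K : ℝ) (hK : ∀ n, -c n ≤ K)
    (C A : ℝ) (hA : 0 ≤ A)
    (hfun : f = fun y => C + (A * y + ∑' n, c n * Real.exp (-(((n:ℝ)+1) * l * y)))) :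
    (∀ x : ℝ, 0 < x →
      iteratedDeriv (k + 2) f x * iteratedDeriv k f x -
        (iteratedDeriv (k + 1) f x) ^ 2 > 0) ∧
    StrictMonoOn
      (fun x : ℝ => iteratedDeriv (k + 1) f x / iteratedDeriv k f x)
      (Set.Ioi 0) := by
  set lam : ℕ → ℝ := fun n => ((n:ℝ)+1) * l with hlam
  set g : ℕ → ℕ → ℝ → ℝ :=
    fun m n x => c n * (-1)^m * lam n ^ m * Real.exp (-(lam n * x)) with hg
  have hlampos : ∀ n, 0 < lam n := fun n => by
    have : (0:ℝ) < (n:ℝ)+1 := by positivity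
    exact mul_pos this hl
  have hderiv : ∀ m n x, 0 < x → HasDerivAt (g m n) (g (m+1) n x) x := by
    intro m n x _
    have h1 : HasDerivAt (fun y : ℝ => -(lam n * y)) (-(lam n)) x := by
      have := ((hasDerivAt_id x).const_mul (lam n)).neg
      rw [mul_one] at this
      exact this
    have h2 := h1.exp
    have h3 := h2.const_mul (c n * (-1)^m * lam n ^ m)
    refine h3.congr_deriv ?_
    simp only [hg]
    ring
  have habs : ∀ m n x, |g m n x| = (-c n) * lam n ^ m * Real.exp (-(lam n * x)) := by
    intro m n x
    simp only [hg]
    rw [abs_mul, abs_mul, abs_mul]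
    rw [abs_of_pos (Real.exp_pos _), abs_of_nonneg (le_of_lt (pow_pos (hlampos n) m)),
      abs_of_neg (hc n), abs_pow, abs_neg, abs_one, one_pow, mul_one]
  have hKnn : 0 ≤ K := le_trans (by linarith [hc 0]) (hK 0)
  have hboundAll : ∀ m r, 0 < r → ∃ u : ℕ → ℝ, Summable u ∧
      ∀ n x, r ≤ x → |g m n x| ≤ u n := by
    intro m r hr
    set ρ : ℝ := Real.exp (-(l * r)) with hρ
    have hρ01 : 0 < ρ := Real.exp_pos _
    have hρlt : ρ < 1 := by
      rw [hρ, Real.exp_lt_one_iff]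
      nlinarith
    refine ⟨fun n => (K * l ^ m) * (((n:ℝ)+1) ^ m * ρ ^ (n+1)), ?_, ?_⟩
    · have hs : Summable (fun n : ℕ => (n:ℝ) ^ m * ρ ^ n) :=
        summable_pow_mul_geometric_of_norm_lt_one m
          (by rwa [Real.norm_eq_abs, abs_of_pos hρ01])
      have := (summable_nat_add_iff 1).mpr hs
      exact (this.congr (fun n => by push_cast; ring)).mul_left _
    · intro n x hx
      rw [habs]
      have h1 : Real.exp (-(lam n * x)) ≤ ρ ^ (n+1) := by
        have : -(lam n * x) ≤ ((n+1:ℕ):ℝ) * (-(l * r)) := by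
          push_cast
          simp only [hlam]
          push_cast
          nlinarith [mul_nonneg (mul_nonneg (by positivity : (0:ℝ) ≤ (n:ℝ)+1) (le_of_lt hl)) (sub_nonneg.mpr hx)]
        calc Real.exp (-(lam n * x)) ≤ Real.exp (((n+1:ℕ):ℝ) * (-(l * r))) :=
              Real.exp_le_exp.mpr this
          _ = ρ ^ (n+1) := by rw [← Real.exp_nat_mul]
      have h2 : lam n ^ m = ((n:ℝ)+1) ^ m * l ^ m := by
        simp only [hlam]; rw [mul_pow]
      rw [h2]
      have hcn : -c n ≤ K := hK n
      have e1 : 0 < Real.exp (-(lam n * x)) := Real.exp_pos _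
      calc (-c n) * (((n:ℝ)+1) ^ m * l ^ m) * Real.exp (-(lam n * x))
          ≤ K * (((n:ℝ)+1) ^ m * l ^ m) * (ρ ^ (n+1)) := by
            apply mul_le_mul
            · apply mul_le_mul_of_nonneg_right hcn
              positivity
            · exact h1
            · positivity
            · positivity
        _ = (K * l ^ m) * (((n:ℝ)+1) ^ m * ρ ^ (n+1)) := by ring
  have hsum0 : ∀ x, 0 < x → Summable (fun n => g 0 n x) := by
    intro x hx
    obtain ⟨u, hu, hb⟩ := hboundAll 0 x hx
    exact Summable.of_norm_bounded hu (fun n => by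
      simpa [Real.norm_eq_abs] using hb n x le_rfl)
  have hbound : ∀ m r, 0 < r → ∃ u : ℕ → ℝ, Summable u ∧
      ∀ n x, r ≤ x → |g (m+1) n x| ≤ u n := fun m r hr => hboundAll (m+1) r hr
  have hfun' : f = fun y => C + (A * y + ∑' n, g 0 n y) := by
    rw [hfun]
    funext y
    congr 1
    congr 1
    apply tsum_congr
    intro n
    simp only [hg, hlam]
    ring_nf
  -- the weight and V
  set w : ℕ → ℝ → ℝ := fun n x => (-c n) * lam n ^ k * Real.exp (-(lam n * x)) with hw
  have hwpos : ∀ n x, 0 < w n x := by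
    intro n x
    simp only [hw]
    exact mul_pos (mul_pos (neg_pos.mpr (hc n)) (pow_pos (hlampos n) k)) (Real.exp_pos _)
  set V : ℕ → ℝ → ℝ := fun m x => (if k + m = 1 then A else 0) + ∑' n, lam n ^ m * w n x
    with hV
  have hgw : ∀ m n x, g (k+m) n x = (-1:ℝ)^(k+m+1) * (lam n ^ m * w n x) := by
    intro m n x
    simp only [hg, hw]
    rw [pow_add (lam n) k m]
    rw [pow_succ]
    ring
  have hsummw : ∀ m x, 0 < x → Summable (fun n => lam n ^ m * w n x) := by
    intro m x hx
    have h1 := (fam_summable g hderiv hsum0 hbound (k+m) x hx).mul_left ((-1:ℝ)^(k+m+1))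
    refine h1.congr (fun n => ?_)
    have hsq : ((-1:ℝ)^(k+m+1)) * ((-1:ℝ)^(k+m+1)) = 1 := by
      rw [← pow_add]
      exact Even.neg_one_pow ⟨k+m+1, by ring⟩
    rw [hgw m n x, ← mul_assoc, hsq, one_mul]
  have htsumg : ∀ m x, 0 < x →
      (∑' n, g (k+m) n x) = (-1:ℝ)^(k+m+1) * ∑' n, lam n ^ m * w n x := by
    intro m x hx
    rw [← tsum_mul_left]
    exact tsum_congr (fun n => hgw m n x)
  have hrep : ∀ m, m ≤ 2 → ∀ x, 0 < x →
      iteratedDeriv (k+m) f x = (-1 : ℝ)^(k+m+1) * V m x := by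
    intro m _ x hx
    rw [hfun']
    rw [rep_affine g hderiv hsum0 hbound C A (k+m) (by omega) x hx]
    rw [htsumg m x hx]
    simp only [hV]
    rcases eq_or_ne (k+m) 1 with h | h
    · rw [h]
      norm_num
    · simp only [if_neg h]
      ring
  have hV0 : ∀ x, 0 < x → 0 < V 0 x := by
    intro x hx
    have h1 : 0 < ∑' n, lam n ^ 0 * w n x :=
      Summable.tsum_pos (hsummw 0 x hx) (fun n => le_of_lt (mul_pos (pow_pos (hlampos n) 0) (hwpos n x))) 0
        (mul_pos (pow_pos (hlampos 0) 0) (hwpos 0 x))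
    simp only [hV]
    rcases eq_or_ne (k+0) 1 with h | h
    · rw [if_pos h]; linarith
    · rw [if_neg h]; linarith
  have hCS : ∀ x, 0 < x → 0 < V 2 x * V 0 x - (V 1 x)^2 := by
    intro x hx
    have hA' : (0:ℝ) ≤ (if k + 0 = 1 then A else 0) := by
      split <;> simp [hA]
    have hkey := key_cs (fun n => w n x) lam (if k + 0 = 1 then A else 0) hA'
      (fun n => le_of_lt (hwpos n x)) (hwpos 0 x) (hwpos 1 x)
      (by
        simp only [hlam]
        intro hcon
        push_cast at hcon
        nlinarith)
      (by
        have := hsummw 0 x hx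
        refine this.congr (fun n => ?_)
        rw [pow_zero, one_mul])
      (by
        have := hsummw 1 x hx
        refine this.congr (fun n => ?_)
        rw [pow_one])
      (hsummw 2 x hx)
    simp only [hV]
    have hone : (if k + 1 = 1 then A else 0) = 0 := by
      rw [if_neg (by omega)]
    have htwo : (if k + 2 = 1 then A else 0) = 0 := by
      rw [if_neg (by omega)]
    rw [hone, htwo]
    have e0 : (∑' n, lam n ^ 0 * w n x) = ∑' n, w n x :=
      tsum_congr (fun n => by rw [pow_zero, one_mul])
    have e1 : (∑' n, lam n ^ 1 * w n x) = ∑' n, lam n * w n x :=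
      tsum_congr (fun n => by rw [pow_one])
    rw [e0, e1]
    simpa using hkey
  have hder : ∀ m, m ≤ 1 → ∀ x, 0 < x →
      HasDerivAt (iteratedDeriv (k+m) f) (iteratedDeriv (k+m+1) f x) x := by
    intro m hm x hx
    rw [hfun']
    have h1 := rep_affine_hasDerivAt g hderiv hsum0 hbound C A (k+m) (by omega) x hx
    have h2 : iteratedDeriv (k+m+1) (fun y => C + (A * y + ∑' n, g 0 n y)) x
        = ∑' n, g (k+m+1) n x := by
      rw [rep_affine g hderiv hsum0 hbound C A (k+m+1) (by omega) x hx]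
      rw [if_neg (by omega)]
      ring
    rw [h2]
    exact h1
  exact master f k V hrep hV0 hCS hder

lemma case_lt_one (q : ℝ) (hq : 0 < q) (hq1 : q < 1) (k : ℕ) (hk : 1 ≤ k) :
    (∀ x : ℝ, 0 < x →
      iteratedDeriv (k + 2) (qDigamma q) x * iteratedDeriv k (qDigamma q) x -
        (iteratedDeriv (k + 1) (qDigamma q) x) ^ 2 > 0) ∧
    StrictMonoOn
      (fun x : ℝ => iteratedDeriv (k + 1) (qDigamma q) x / iteratedDeriv k (qDigamma q) x)
      (Set.Ioi 0) := by
  have hlogneg : Real.log q < 0 := Real.log_neg hq hq1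
  have hDpos : ∀ n : ℕ, 0 < 1 - q ^ ((n:ℝ)+1) := by
    intro n
    have : q ^ ((n:ℝ)+1) < 1 := Real.rpow_lt_one (le_of_lt hq) hq1 (by positivity)
    linarith
  set c : ℕ → ℝ := fun n => Real.log q / (1 - q ^ ((n:ℝ)+1)) with hc
  have hcneg : ∀ n, c n < 0 := fun n => div_neg_of_neg_of_pos hlogneg (hDpos n)
  have hK : ∀ n, -c n ≤ (-Real.log q) / (1 - q) := by
    intro n
    rw [hc]
    rw [← neg_div]
    apply div_le_div_of_nonneg_left (by linarith) (by linarith)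
    have : q ^ ((n:ℝ)+1) ≤ q := by
      calc q ^ ((n:ℝ)+1) ≤ q ^ (1:ℝ) :=
            Real.rpow_le_rpow_of_exponent_ge hq (le_of_lt hq1) (by
              have : (0:ℝ) ≤ (n:ℝ) := Nat.cast_nonneg n
              linarith)
        _ = q := Real.rpow_one q
    linarith
  have hfun : qDigamma q = fun y => (-Real.log (1-q)) +
      ((0:ℝ) * y + ∑' n : ℕ, c n * Real.exp (-(((n:ℝ)+1) * (-Real.log q) * y))) := by
    funext y
    simp only [qDigamma, if_pos hq1, zero_mul, zero_add]
    congr 1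
    rw [← tsum_mul_left]
    apply tsum_congr
    intro n
    have hD := hDpos n
    have hDne : 1 - q ^ ((n:ℝ)+1) ≠ 0 := ne_of_gt hD
    rw [Real.rpow_def_of_pos hq (((n:ℝ)+1) * y)]
    have hexp : Real.exp (Real.log q * (((n:ℝ)+1) * y))
        = Real.exp (-(((n:ℝ)+1) * (-Real.log q) * y)) := by
      congr 1; ring
    rw [hexp, hc]
    field_simp
  exact exp_case (qDigamma q) k hk (-Real.log q) (by linarith) c hcneg
    ((-Real.log q) / (1 - q)) hK (-Real.log (1-q)) 0 le_rfl hfun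

lemma case_gt_one (q : ℝ) (hq1 : 1 < q) (k : ℕ) (hk : 1 ≤ k) :
    (∀ x : ℝ, 0 < x →
      iteratedDeriv (k + 2) (qDigamma q) x * iteratedDeriv k (qDigamma q) x -
        (iteratedDeriv (k + 1) (qDigamma q) x) ^ 2 > 0) ∧
    StrictMonoOn
      (fun x : ℝ => iteratedDeriv (k + 1) (qDigamma q) x / iteratedDeriv k (qDigamma q) x)
      (Set.Ioi 0) := by
  have hq : (0:ℝ) < q := by linarith
  have hlogpos : 0 < Real.log q := Real.log_pos hq1
  have hDpos : ∀ n : ℕ, 0 < 1 - q ^ (-((n:ℝ)+1)) := by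
    intro n
    have : q ^ (-((n:ℝ)+1)) < 1 := by
      apply Real.rpow_lt_one_of_one_lt_of_neg hq1
      have : (0:ℝ) ≤ (n:ℝ) := Nat.cast_nonneg n
      linarith
    linarith
  set c : ℕ → ℝ := fun n => -Real.log q / (1 - q ^ (-((n:ℝ)+1))) with hc
  have hcneg : ∀ n, c n < 0 := fun n => div_neg_of_neg_of_pos (by linarith) (hDpos n)
  have hqinv : q⁻¹ < 1 := inv_lt_one_of_one_lt₀ hq1
  have hK : ∀ n, -c n ≤ Real.log q / (1 - q⁻¹) := by
    intro n
    simp only [hc]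
    rw [neg_div, neg_neg]
    apply div_le_div_of_nonneg_left (le_of_lt hlogpos) (by linarith)
    have : q ^ (-((n:ℝ)+1)) ≤ q ^ (-1:ℝ) := by
      apply Real.rpow_le_rpow_of_exponent_le (le_of_lt hq1)
      have : (0:ℝ) ≤ (n:ℝ) := Nat.cast_nonneg n
      linarith
    rw [Real.rpow_neg_one] at this
    linarith
  have hfun : qDigamma q = fun y => (-Real.log (q-1) - Real.log q / 2) +
      (Real.log q * y + ∑' n : ℕ, c n * Real.exp (-(((n:ℝ)+1) * Real.log q * y))) := by
    funext y
    simp only [qDigamma, if_neg (not_lt.mpr (le_of_lt hq1)), if_pos hq1]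
    have hterm : ∀ n : ℕ, c n * Real.exp (-(((n:ℝ)+1) * Real.log q * y))
        = -Real.log q * (q ^ (-(((n:ℝ)+1) * y)) / (1 - q ^ (-((n:ℝ)+1)))) := by
      intro n
      have hD := hDpos n
      have hDne : 1 - q ^ (-((n:ℝ)+1)) ≠ 0 := ne_of_gt hD
      rw [Real.rpow_def_of_pos hq (-(((n:ℝ)+1) * y))]
      have hexp : Real.exp (Real.log q * -(((n:ℝ)+1) * y))
          = Real.exp (-(((n:ℝ)+1) * Real.log q * y)) := by
        congr 1; ring
      rw [hexp, hc]
      field_simp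
    have h1 : (∑' n : ℕ, c n * Real.exp (-(((n:ℝ)+1) * Real.log q * y)))
        = -Real.log q * ∑' n : ℕ, q ^ (-(((n:ℝ)+1) * y)) / (1 - q ^ (-((n:ℝ)+1))) := by
      rw [← tsum_mul_left]
      exact tsum_congr hterm
    rw [h1]
    ring
  exact exp_case (qDigamma q) k hk (Real.log q) hlogpos c hcneg
    (Real.log q / (1 - q⁻¹)) hK (-Real.log (q-1) - Real.log q / 2) (Real.log q)
    (le_of_lt hlogpos) hfun

noncomputable def phiF (n : ℕ) (y : ℝ) : ℝ := 1/((n:ℝ)+1) - (y + (n:ℝ))⁻¹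

lemma summable_inv_sq : Summable (fun j : ℕ => (((j:ℝ)+1)^2)⁻¹) := by
  have h := Real.summable_one_div_nat_pow.mpr (le_refl 2)
  have h2 := (summable_nat_add_iff 1).mpr h
  refine h2.congr (fun n => ?_)
  push_cast
  rw [one_div]

lemma phi_bound (a b : ℝ) (ha : 0 < a) (j : ℕ) (x : ℝ) (hax : a ≤ x) (hxb : x ≤ b) :
    |phiF j x| ≤ ((b+1)*(a+1)/a) * (((j:ℝ)+1)^2)⁻¹ := by
  set J := (j:ℝ) with hJ
  have hJ0 : 0 ≤ J := Nat.cast_nonneg j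
  have hxJ : 0 < x + J := by linarith
  have hb : a ≤ b := le_trans hax hxb
  have h1 : phiF j x = (x-1)/((J+1)*(x+J)) := by
    simp only [phiF]
    rw [← hJ]
    field_simp
    ring
  rw [h1, abs_div, abs_of_pos (by positivity : (0:ℝ) < (J+1)*(x+J))]
  have hnum : |x - 1| ≤ b + 1 := by
    rw [abs_le]; constructor <;> nlinarith
  have hden : a/(a+1) * ((J+1)^2) ≤ (J+1)*(x+J) := by
    rw [div_mul_eq_mul_div, div_le_iff₀ (by linarith : (0:ℝ) < a+1)]
    have hax2 : 0 < a * x := mul_pos ha (lt_of_lt_of_le ha hax)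
    have hinner : 0 ≤ (x+J)*(a+1) - a*(J+1) := by nlinarith
    nlinarith [mul_nonneg (by linarith : (0:ℝ) ≤ J+1) hinner]
  have hdenpos : (0:ℝ) < a/(a+1) * ((J+1)^2) := by positivity
  calc |x-1| / ((J+1)*(x+J)) ≤ (b+1) / (a/(a+1) * ((J+1)^2)) := by
        apply div_le_div₀ (by linarith) hnum hdenpos hden
    _ = ((b+1)*(a+1)/a) * (((J:ℝ)+1)^2)⁻¹ := by
        field_simp
  
lemma summable_phi (x : ℝ) (hx : 0 < x) : Summable (fun n => phiF n x) := by
  refine Summable.of_norm_bounded ((summable_inv_sq).mul_left ((x+1)*(x+1)/x)) (fun n => ?_)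
  rw [Real.norm_eq_abs]
  exact phi_bound x x hx n x le_rfl le_rfl

noncomputable def psiF (y : ℝ) : ℝ := -Real.eulerMascheroniConstant + ∑' n, phiF n y

noncomputable def LF (N : ℕ) (x : ℝ) : ℝ :=
  x * Real.log N + Real.log (Nat.factorial N) - ∑ j ∈ Finset.range (N+1), Real.log (x + j)

noncomputable def dLF (N : ℕ) (x : ℝ) : ℝ :=
  Real.log N - ∑ j ∈ Finset.range (N+1), (x + (j:ℝ))⁻¹

lemma LF_tendsto (x : ℝ) (hx : 0 < x) :
    Tendsto (fun N => LF N x) atTop (𝓝 (Real.log (Real.Gamma x))) := by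
  have hG : 0 < Real.Gamma x := Real.Gamma_pos_of_pos hx
  have h1 : Tendsto (fun N => Real.log (Real.GammaSeq x N)) atTop
      (𝓝 (Real.log (Real.Gamma x))) :=
    ((Real.continuousAt_log (ne_of_gt hG)).tendsto).comp (Real.GammaSeq_tendsto_Gamma x)
  refine h1.congr' ?_
  filter_upwards [eventually_ge_atTop 1] with N hN
  have hNpos : (0:ℝ) < (N:ℝ) := by exact_mod_cast hN
  have hprodpos : ∀ j ∈ Finset.range (N+1), (0:ℝ) < x + (j:ℝ) := by
    intro j _
    have : (0:ℝ) ≤ (j:ℝ) := Nat.cast_nonneg j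
    linarith
  have hprodne : ∀ j ∈ Finset.range (N+1), x + (j:ℝ) ≠ 0 :=
    fun j hj => ne_of_gt (hprodpos j hj)
  have hProd : (0:ℝ) < ∏ j ∈ Finset.range (N+1), (x + (j:ℝ)) :=
    Finset.prod_pos hprodpos
  rw [Real.GammaSeq, Real.log_div (by positivity) (ne_of_gt hProd),
    Real.log_mul (by positivity) (by positivity),
    Real.log_rpow hNpos, Real.log_prod hprodne]
  simp [LF]

lemma LF_hasDeriv (N : ℕ) (x : ℝ) (hx : 0 < x) : HasDerivAt (LF N) (dLF N x) x := by
  have h1 : HasDerivAt (fun y : ℝ => y * Real.log N + Real.log (Nat.factorial N))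
      (Real.log N) x := by
    simpa using (hasDerivAt_mul_const (Real.log (N:ℝ))).add_const (Real.log (Nat.factorial N))
  have h2 : HasDerivAt (fun y : ℝ => ∑ j ∈ Finset.range (N+1), Real.log (y + j))
      (∑ j ∈ Finset.range (N+1), (x + (j:ℝ))⁻¹) x := by
    apply HasDerivAt.fun_sum
    intro j _
    have hj : (0:ℝ) ≤ (j:ℝ) := Nat.cast_nonneg j
    have hne : x + (j:ℝ) ≠ 0 := by positivity
    have hbase : HasDerivAt (fun y : ℝ => y + (j:ℝ)) 1 x := (hasDerivAt_id x).add_const _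
    have := (Real.hasDerivAt_log hne).comp x hbase
    rw [mul_one] at this
    exact this
  exact h1.sub h2

lemma harmonic_cast (n : ℕ) : ((harmonic n : ℚ) : ℝ) = ∑ j ∈ Finset.range n, 1/((j:ℝ)+1) := by
  rw [harmonic]
  push_cast
  refine Finset.sum_congr rfl (fun j _ => ?_)
  rw [one_div]

lemma e_tendsto : Tendsto (fun N : ℕ => Real.log N - ((harmonic (N+1) : ℚ) : ℝ)) atTop
    (𝓝 (-Real.eulerMascheroniConstant)) := by
  have h1 : Tendsto (fun N : ℕ => ((harmonic (N+1) : ℚ) : ℝ) - Real.log ((N:ℝ)+1)) atTop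
      (𝓝 Real.eulerMascheroniConstant) := by
    have := Real.tendsto_harmonic_sub_log.comp (tendsto_add_atTop_nat 1)
    refine this.congr (fun N => ?_)
    simp only [Function.comp_apply]
    push_cast
    ring_nf
  have h2 : Tendsto (fun N : ℕ => Real.log ((N:ℝ)+1) - Real.log N) atTop (𝓝 0) := by
    have h3 : Tendsto (fun N : ℕ => Real.log (1 + (N:ℝ)⁻¹)) atTop (𝓝 0) := by
      have h4 : Tendsto (fun N : ℕ => 1 + (N:ℝ)⁻¹) atTop (𝓝 1) := by
        simpa using tendsto_const_nhds.add (tendsto_inv_atTop_nhds_zero_nat (𝕜 := ℝ))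
      have h5 := (Real.continuousAt_log (one_ne_zero)).tendsto.comp h4
      simpa [Function.comp_def] using h5
    refine h3.congr' ?_
    filter_upwards [eventually_ge_atTop 1] with N hN
    have hN0 : (0:ℝ) < (N:ℝ) := by exact_mod_cast hN
    rw [← Real.log_div (by positivity) (ne_of_gt hN0)]
    congr 1
    field_simp
  have := (h1.add h2).neg
  rw [add_zero] at this
  refine this.congr (fun N => ?_)
  ring

lemma dLF_decomp (N : ℕ) (x : ℝ) : dLF N x =
    (Real.log N - ((harmonic (N+1) : ℚ) : ℝ)) + ∑ j ∈ Finset.range (N+1), phiF j x := by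
  simp only [dLF, phiF, Finset.sum_sub_distrib, harmonic_cast]
  ring

lemma dLF_tlu : TendstoLocallyUniformlyOn dLF psiF atTop (Ioi 0) := by
  rw [tendstoLocallyUniformlyOn_iff_forall_isCompact isOpen_Ioi]
  intro K hKsub hKc
  rcases K.eq_empty_or_nonempty with rfl | hne
  · exact tendstoUniformlyOn_empty
  obtain ⟨a, haK, halb⟩ := hKc.exists_isLeast hne
  obtain ⟨b, hbK, hbub⟩ := hKc.exists_isGreatest hne
  have ha : 0 < a := hKsub haK
  have hu : Summable (fun j : ℕ => ((b+1)*(a+1)/a) * (((j:ℝ)+1)^2)⁻¹) :=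
    summable_inv_sq.mul_left _
  have hpart : TendstoUniformlyOn (fun N x => ∑ j ∈ Finset.range N, phiF j x)
      (fun x => ∑' j, phiF j x) atTop K := by
    refine tendstoUniformlyOn_tsum_nat hu (fun j x hxK => ?_)
    rw [Real.norm_eq_abs]
    exact phi_bound a b ha j x (halb hxK) (hbub hxK)
  have hpart1 : TendstoUniformlyOn (fun N x => ∑ j ∈ Finset.range (N+1), phiF j x)
      (fun x => ∑' j, phiF j x) atTop K := by
    rw [Metric.tendstoUniformlyOn_iff] at hpart ⊢
    intro ε hε
    obtain ⟨N₀, hN₀⟩ := eventually_atTop.mp (hpart ε hε)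
    exact eventually_atTop.mpr ⟨N₀, fun N hN => hN₀ (N+1) (by omega)⟩
  have hconst : TendstoUniformlyOn
      (fun (N : ℕ) (_ : ℝ) => Real.log N - ((harmonic (N+1) : ℚ) : ℝ))
      (fun _ => -Real.eulerMascheroniConstant) atTop K :=
    e_tendsto.tendstoUniformlyOn_const K
  have hsum := hconst.add hpart1
  refine (hsum.congr ?_).congr_right ?_
  · filter_upwards with N x hxK
    simp only [Pi.add_apply]
    rw [← dLF_decomp]
  · intro x _
    simp only [Pi.add_apply]
    rfl

lemma hasDerivAt_logGamma (x : ℝ) (hx : 0 < x) :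
    HasDerivAt (fun y => Real.log (Real.Gamma y)) (psiF x) x :=
  hasDerivAt_of_tendstoLocallyUniformlyOn isOpen_Ioi dLF_tlu
    (Filter.Eventually.of_forall (fun N => fun y hy => LF_hasDeriv N y hy))
    (fun y hy => LF_tendsto y hy) hx

noncomputable def gP (m n : ℕ) (y : ℝ) : ℝ :=
  if m = 0 then phiF n y else ((-1:ℝ)^(m+1) * (Nat.factorial m) * ((y+(n:ℝ))^(m+1))⁻¹)

lemma inv_pow_bound (r : ℝ) (hr : 0 < r) (p : ℕ) (hp : 2 ≤ p) (n : ℕ) (x : ℝ) (hx : r ≤ x) :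
    ((x+(n:ℝ))^p)⁻¹ ≤ ((min r 1)^p)⁻¹ * (((n:ℝ)+1)^2)⁻¹ := by
  set ρ := min r 1 with hρ
  have hρpos : 0 < ρ := lt_min hr one_pos
  have hρ1 : ρ ≤ 1 := min_le_right r 1
  have hρr : ρ ≤ r := min_le_left r 1
  have hn0 : (0:ℝ) ≤ (n:ℝ) := Nat.cast_nonneg n
  have h1 : ρ * ((n:ℝ)+1) ≤ x + n := by
    have := mul_le_of_le_one_left hn0 hρ1
    nlinarith
  have h2 : (ρ*((n:ℝ)+1))^p ≤ (x+(n:ℝ))^p :=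
    pow_le_pow_left₀ (by positivity) h1 p
  have h3 : ρ^p * ((n:ℝ)+1)^2 ≤ (ρ*((n:ℝ)+1))^p := by
    rw [mul_pow]
    have : ((n:ℝ)+1)^2 ≤ ((n:ℝ)+1)^p := pow_le_pow_right₀ (by linarith) hp
    have hρp : (0:ℝ) ≤ ρ^p := by positivity
    nlinarith
  rw [← mul_inv]
  apply inv_anti₀ (by positivity)
  linarith

lemma summable_inv_pow (x : ℝ) (hx : 0 < x) (p : ℕ) (hp : 2 ≤ p) :
    Summable (fun n : ℕ => ((x+(n:ℝ))^p)⁻¹) := by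
  refine Summable.of_norm_bounded (summable_inv_sq.mul_left (((min x 1)^p)⁻¹)) (fun n => ?_)
  rw [Real.norm_eq_abs, abs_of_pos (by positivity : (0:ℝ) < ((x+(n:ℝ))^p)⁻¹)]
  exact inv_pow_bound x hx p hp n x le_rfl

lemma gP_deriv : ∀ m n x, 0 < x → HasDerivAt (gP m n) (gP (m+1) n x) x := by
  intro m n x hx
  have hxn : 0 < x + (n:ℝ) := by positivity
  have hne : x + (n:ℝ) ≠ 0 := ne_of_gt hxn
  have hbase : HasDerivAt (fun y : ℝ => y + (n:ℝ)) 1 x := (hasDerivAt_id x).add_const _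
  cases m with
  | zero =>
    have hinv : HasDerivAt (fun y : ℝ => (y+(n:ℝ))⁻¹) (-1/(x+(n:ℝ))^2) x := hbase.inv hne
    have h2 := hinv.const_sub (1/((n:ℝ)+1))
    have heq : gP 0 n = fun y => 1/((n:ℝ)+1) - (y+(n:ℝ))⁻¹ := by
      funext y; simp [gP, phiF]
    rw [heq]
    refine h2.congr_deriv ?_
    simp [gP]
    field_simp
  | succ j =>
    have hpow : HasDerivAt (fun y : ℝ => (y+(n:ℝ))^(j+2)) (((j:ℝ)+2) * (x+(n:ℝ))^(j+1)) x := by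
      have := hbase.pow (j+2)
      rw [mul_one] at this
      push_cast at this
      exact this
    have hne2 : (x+(n:ℝ))^(j+2) ≠ 0 := pow_ne_zero _ hne
    have hinv := hpow.inv hne2
    have h3 := hinv.const_mul ((-1:ℝ)^(j+2) * (Nat.factorial (j+1)))
    have heq : gP (j+1) n = fun y =>
        ((-1:ℝ)^(j+2) * (Nat.factorial (j+1))) * ((y+(n:ℝ))^(j+2))⁻¹ := by
      funext y; simp [gP]
    rw [heq]
    refine h3.congr_deriv ?_
    simp only [gP, if_neg (by omega : ¬ j + 2 = 0)]
    have hpowid : ((x+(n:ℝ))^(j+2))^2 = (x+(n:ℝ))^(j+1) * (x+(n:ℝ))^(j+3) := by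
      rw [← pow_mul, ← pow_add]
      congr 1
      omega
    rw [hpowid]
    rw [Nat.factorial_succ (j+1)]
    push_cast
    field_simp
    ring

lemma gP_bound : ∀ m r, 0 < r → ∃ u : ℕ → ℝ, Summable u ∧
    ∀ n x, r ≤ x → |gP (m+1) n x| ≤ u n := by
  intro m r hr
  refine ⟨fun n => (Nat.factorial (m+1) : ℝ) * (((min r 1)^(m+2))⁻¹ * (((n:ℝ)+1)^2)⁻¹),
    ((summable_inv_sq.mul_left _).mul_left _), fun n x hx => ?_⟩
  have hxn : 0 < x + (n:ℝ) := by
    have : (0:ℝ) ≤ (n:ℝ) := Nat.cast_nonneg n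
    linarith
  have habs : |gP (m+1) n x| = (Nat.factorial (m+1) : ℝ) * ((x+(n:ℝ))^(m+2))⁻¹ := by
    simp only [gP, if_neg (by omega : ¬ m + 1 = 0)]
    rw [abs_mul, abs_mul, abs_pow, abs_neg, abs_one, one_pow, one_mul,
      abs_of_pos (by positivity : (0:ℝ) < (Nat.factorial (m+1) : ℝ)),
      abs_of_pos (by positivity : (0:ℝ) < ((x+(n:ℝ))^(m+1+1))⁻¹)]
  rw [habs]
  apply mul_le_mul_of_nonneg_left _ (by positivity)
  exact inv_pow_bound r hr (m+2) (by omega) n x hx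

lemma gP_sum0 : ∀ x, 0 < x → Summable (fun n => gP 0 n x) := by
  intro x hx
  refine (summable_phi x hx).congr (fun n => ?_)
  simp [gP]

lemma case_one (k : ℕ) (hk : 1 ≤ k) :
    (∀ x : ℝ, 0 < x →
      iteratedDeriv (k + 2) (qDigamma 1) x * iteratedDeriv k (qDigamma 1) x -
        (iteratedDeriv (k + 1) (qDigamma 1) x) ^ 2 > 0) ∧
    StrictMonoOn
      (fun x : ℝ => iteratedDeriv (k + 1) (qDigamma 1) x / iteratedDeriv k (qDigamma 1) x)
      (Set.Ioi 0) := by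
  set F : ℝ → ℝ := fun y =>
    (-Real.eulerMascheroniConstant) + ((0:ℝ) * y + ∑' n, gP 0 n y) with hF
  have hEqOn : ∀ y ∈ Ioi (0:ℝ), qDigamma 1 y = F y := by
    intro y hy
    have h1 : qDigamma 1 y = deriv (fun z : ℝ => Real.log (Real.Gamma z)) y := by
      simp [qDigamma]
    rw [h1, (hasDerivAt_logGamma y hy).deriv, hF]
    simp only [psiF, zero_mul, zero_add]
    congr 1
  -- representation of iterated derivatives
  have hrepF : ∀ m, 1 ≤ m → ∀ x, 0 < x →
      iteratedDeriv m (qDigamma 1) x = ∑' n, gP m n x := by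
    intro m hm x hx
    have he : qDigamma 1 =ᶠ[nhds x] F :=
      eventuallyEq_of_mem (isOpen_Ioi.mem_nhds hx) hEqOn
    rw [EventuallyEq.iteratedDeriv_eq' m he, hF,
      rep_affine gP gP_deriv gP_sum0 gP_bound (-Real.eulerMascheroniConstant) 0 m hm x hx]
    simp
  have hderF : ∀ m, 1 ≤ m → ∀ x, 0 < x →
      HasDerivAt (iteratedDeriv m (qDigamma 1)) (∑' n, gP (m+1) n x) x := by
    intro m hm x hx
    have h1 := rep_affine_hasDerivAt gP gP_deriv gP_sum0 gP_bound
      (-Real.eulerMascheroniConstant) 0 m hm x hx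
    rw [← hF] at h1
    refine h1.congr_of_eventuallyEq ?_
    refine eventuallyEq_of_mem (isOpen_Ioi.mem_nhds hx) (fun y hy => ?_)
    exact EventuallyEq.iteratedDeriv_eq' m
      (eventuallyEq_of_mem (isOpen_Ioi.mem_nhds hy) hEqOn)
  -- the V family
  set V : ℕ → ℝ → ℝ := fun m x =>
    (Nat.factorial (k+m) : ℝ) * ∑' n : ℕ, ((x+(n:ℝ))^(k+m+1))⁻¹ with hV
  have htsum : ∀ m x, 0 < x →
      (∑' n, gP (k+m) n x) = (-1:ℝ)^(k+m+1) * V m x := by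
    intro m x hx
    have h1 : ∀ n : ℕ, gP (k+m) n x
        = ((-1:ℝ)^(k+m+1) * (Nat.factorial (k+m) : ℝ)) * ((x+(n:ℝ))^(k+m+1))⁻¹ := by
      intro n
      simp only [gP, if_neg (by omega : ¬ k + m = 0)]
    rw [tsum_congr h1, tsum_mul_left, mul_assoc]
  have hrep : ∀ m, m ≤ 2 → ∀ x, 0 < x →
      iteratedDeriv (k+m) (qDigamma 1) x = (-1:ℝ)^(k+m+1) * V m x := by
    intro m _ x hx
    rw [hrepF (k+m) (by omega) x hx, htsum m x hx]
  have hSpos : ∀ p, 2 ≤ p → ∀ x : ℝ, 0 < x → 0 < ∑' n : ℕ, ((x+(n:ℝ))^p)⁻¹ := by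
    intro p hp x hx
    refine Summable.tsum_pos (summable_inv_pow x hx p hp) (fun n => by positivity) 0 (by positivity)
  have hV0 : ∀ x, 0 < x → 0 < V 0 x := by
    intro x hx
    simp only [hV]
    have := hSpos (k+0+1) (by omega) x hx
    positivity
  have hCS : ∀ x, 0 < x → 0 < V 2 x * V 0 x - (V 1 x)^2 := by
    intro x hx
    have hxn : ∀ n : ℕ, (0:ℝ) < x + (n:ℝ) := fun n => by positivity
    set u : ℕ → ℝ := fun n => ((x+(n:ℝ))^(k+1))⁻¹ with hu
    set t : ℕ → ℝ := fun n => (x+(n:ℝ))⁻¹ with ht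
    have htu : ∀ n, t n * u n = ((x+(n:ℝ))^(k+2))⁻¹ := by
      intro n
      simp only [hu, ht]
      rw [← mul_inv, ← pow_succ']
    have ht2u : ∀ n, t n ^ 2 * u n = ((x+(n:ℝ))^(k+3))⁻¹ := by
      intro n
      simp only [hu, ht]
      rw [inv_pow, ← mul_inv, ← pow_add]
      congr 2
      omega
    have hkey := key_cs u t 0 le_rfl (fun n => by positivity)
      (by positivity) (by positivity)
      (by
        simp only [ht]
        intro hcon
        rw [Nat.cast_zero, add_zero, Nat.cast_one] at hcon
        have := inv_inj.mp hcon
        linarith)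
      (summable_inv_pow x hx (k+1) (by omega))
      ((summable_inv_pow x hx (k+2) (by omega)).congr (fun n => (htu n).symm))
      ((summable_inv_pow x hx (k+3) (by omega)).congr (fun n => (ht2u n).symm))
    rw [zero_add, tsum_congr htu, tsum_congr ht2u] at hkey
    set S1 := ∑' n : ℕ, ((x+(n:ℝ))^(k+1))⁻¹ with hS1
    set S2 := ∑' n : ℕ, ((x+(n:ℝ))^(k+2))⁻¹ with hS2
    set S3 := ∑' n : ℕ, ((x+(n:ℝ))^(k+3))⁻¹ with hS3
    have hS1pos : 0 < S1 := hSpos (k+1) (by omega) x hx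
    have hS3pos : 0 < S3 := hSpos (k+3) (by omega) x hx
    have hfact : ((Nat.factorial (k+1) : ℝ))^2
        ≤ (Nat.factorial (k+2) : ℝ) * (Nat.factorial k : ℝ) := by
      rw [Nat.factorial_succ (k+1), Nat.factorial_succ k]
      push_cast
      have h0 : (0:ℝ) ≤ (Nat.factorial k : ℝ) := by positivity
      have h1 : (0:ℝ) ≤ (k:ℝ) := Nat.cast_nonneg k
      nlinarith [sq_nonneg ((Nat.factorial k : ℝ))]
    have h30 : 0 ≤ S3 * S1 := by positivity
    have hx1 := mul_le_mul_of_nonneg_right hfact h30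
    have hpos2 : (0:ℝ) < ((Nat.factorial (k+1) : ℝ))^2 := by positivity
    have hfin := mul_pos hpos2 hkey
    simp only [hV, Nat.add_zero]
    have e1 : k+1+1 = k+2 := by omega
    have e2 : k+2+1 = k+3 := by omega
    rw [e1, e2, ← hS1, ← hS2, ← hS3]
    have hstep : 0 < ((Nat.factorial (k+2) : ℝ) * (Nat.factorial k : ℝ)) * (S3*S1)
        - ((Nat.factorial (k+1) : ℝ))^2 * S2^2 := by nlinarith [hx1, hfin]
    nlinarith [hstep]
  have hder : ∀ m, m ≤ 1 → ∀ x, 0 < x →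
      HasDerivAt (iteratedDeriv (k+m) (qDigamma 1)) (iteratedDeriv (k+m+1) (qDigamma 1) x) x := by
    intro m _ x hx
    have h1 := hderF (k+m) (by omega) x hx
    rwa [← hrepF (k+m+1) (by omega) x hx] at h1
  exact master (qDigamma 1) k V hrep hV0 hCS hder


/-- For every `q > 0`, `k ≥ 1` and `x > 0`,
`ψ_q^{(k+2)}(x)·ψ_q^{(k)}(x) - (ψ_q^{(k+1)}(x))² > 0`; consequently
`ψ_q^{(k+1)}/ψ_q^{(k)}` is increasing on `(0,∞)`. -/
theorem iteratedDeriv_qDigamma_ratio_strictMonoOn (q : ℝ) (hq : 0 < q) (k : ℕ) (hk : 1 ≤ k) :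
    (∀ x : ℝ, 0 < x →
      iteratedDeriv (k + 2) (qDigamma q) x * iteratedDeriv k (qDigamma q) x -
        (iteratedDeriv (k + 1) (qDigamma q) x) ^ 2 > 0) ∧
    StrictMonoOn
      (fun x : ℝ => iteratedDeriv (k + 1) (qDigamma q) x / iteratedDeriv k (qDigamma q) x)
      (Set.Ioi 0) := by
  rcases lt_trichotomy q 1 with h | h | h
  · exact case_lt_one q hq h k hk
  · rw [h]
    exact case_one k hk
  · exact case_gt_one q h k hk
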